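/- Let k ≥ 2 and q ≥ 1 be integers. Under the first-choice labeling c, a cell S of the regular triangulation 𝒯 of Δ_{k,q} is non-monochromatic if and only if S contains a vertex whose first coordinate equals 0. -/

import Mathlib

open Finset

/-- Membership in the discrete simplex `Δ_{k,q} ∩ ℤ^k`:
integer vectors with nonnegative entries summing to `q`. -/
def inSimplex (k q : ℕ) (v : Fin k → ℤ) : Prop :=
  (∀ i, 0 ≤ v i) ∧ (∑ i, v i) = (q : ℤ)

/-- The nonzero entries of `d`, read from left to right, alternate in sign. -/
def AltSign {k : ℕ} (d : Fin k → ℤ) : Prop :=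
  ∀ i j : Fin k, i < j → d i ≠ 0 → d j ≠ 0 →
    (∀ l : Fin k, i < l → l < j → d l = 0) → d i = - d j

/-- Adjacency in the graph `G_k` on `Δ_{k,q} ∩ ℤ^k`. -/
def AdjG (k q : ℕ) (v w : Fin k → ℤ) : Prop :=
  v ≠ w ∧ inSimplex k q v ∧ inSimplex k q w ∧
    (∀ i, v i - w i = -1 ∨ v i - w i = 0 ∨ v i - w i = 1) ∧
    (Finset.univ.filter (fun i => v i - w i = 1)).card =
      (Finset.univ.filter (fun i => v i - w i = -1)).card ∧
    AltSign (fun i => v i - w i)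

/-- A cell of the regular triangulation `𝒯` of `Δ_{k,q}`: a `k`-element subset of
`Δ_{k,q} ∩ ℤ^k` whose elements are pairwise adjacent in `G_k`. -/
def IsCell (k q : ℕ) (S : Finset (Fin k → ℤ)) : Prop :=
  S.card = k ∧ (∀ v ∈ S, inSimplex k q v) ∧
    (∀ v ∈ S, ∀ w ∈ S, v ≠ w → AdjG k q v w)

/-- A Sperner labeling of `Δ_{k,q} ∩ ℤ^k`. -/
def IsSperner (k q : ℕ) (c : (Fin k → ℤ) → Fin k) : Prop :=
  ∀ v : Fin k → ℤ, inSimplex k q v → ∀ i : Fin k, v i = 0 → c v ≠ i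

/-- A cell is non-monochromatic for `c` if `c` takes at least two values on it. -/
def NonMono {k : ℕ} (c : (Fin k → ℤ) → Fin k) (S : Finset (Fin k → ℤ)) : Prop :=
  ∃ u ∈ S, ∃ v ∈ S, c u ≠ c v

/-- Membership in `W_{k,q} = R_{k,q} ∩ ℤ^{k-1}`. -/
def inW (k q : ℕ) (w : Fin (k-1) → ℤ) : Prop :=
  (∀ i, 0 ≤ w i) ∧ (∀ i, w i ≤ (q : ℤ)) ∧
    ∀ i j : Fin (k-1), i ≤ j → w i ≤ w j

/-- A permutation `π` of `{1,…,k-1}` (here `Fin (k-1)`) is consistent with `w`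
if `w i = w (i+1)` implies `π i < π (i+1)`. -/
def Consistent (k : ℕ) (w : Fin (k-1) → ℤ) (π : Equiv.Perm (Fin (k-1))) : Prop :=
  ∀ i j : Fin (k-1), (i : ℕ) + 1 = (j : ℕ) → w i = w j → π i < π j

/-- The simplex `σ(w,π) ⊆ ℝ^{k-1}`. -/
def simplexSet (k : ℕ) (w : Fin (k-1) → ℤ) (π : Equiv.Perm (Fin (k-1))) :
    Set (Fin (k-1) → ℝ) :=
  {y | (∀ i, 0 ≤ y i) ∧
    (∀ s, 0 ≤ y (π s) - (w (π s) : ℝ)) ∧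
    (∀ s, y (π s) - (w (π s) : ℝ) ≤ 1) ∧
    (∀ s t : Fin (k-1), s ≤ t →
      y (π s) - (w (π s) : ℝ) ≤ y (π t) - (w (π t) : ℝ))}

/-- Coercion of an integer vector to a real vector. -/
def toR {n : ℕ} (w : Fin n → ℤ) : Fin n → ℝ := fun i => (w i : ℝ)

/-- Adjacency in the graph `G'_k` on `W_{k,q}`. -/
def AdjG' (k q : ℕ) (w1 w2 : Fin (k-1) → ℤ) : Prop :=
  w1 ≠ w2 ∧ inW k q w1 ∧ inW k q w2 ∧
    ∃ w : Fin (k-1) → ℤ, ∃ π : Equiv.Perm (Fin (k-1)),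
      inW k q w ∧ Consistent k w π ∧
        toR w1 ∈ simplexSet k w π ∧ toR w2 ∈ simplexSet k w π

/-- Adjacency in the graph `G''_k` on `W_{k,q}`. -/
def AdjG'' (k q : ℕ) (w1 w2 : Fin (k-1) → ℤ) : Prop :=
  w1 ≠ w2 ∧ inW k q w1 ∧ inW k q w2 ∧
    ((∀ i, w1 i - w2 i = 0 ∨ w1 i - w2 i = 1) ∨
      (∀ i, w1 i - w2 i = -1 ∨ w1 i - w2 i = 0))

/-- Auxiliary extension of `y : Fin (k-1) → ℤ` to `ℕ`, taking value `q` beyond `k-2`. -/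
def extW (k q : ℕ) (y : Fin (k-1) → ℤ) : ℕ → ℤ := fun n =>
  if h : n < k - 1 then y ⟨n, h⟩ else (q : ℤ)

/-- The map `φ(y₁,…,y_{k-1}) = (y₁, y₂ - y₁, …, y_{k-1} - y_{k-2}, q - y_{k-1})`. -/
def phi (k q : ℕ) (y : Fin (k-1) → ℤ) : Fin k → ℤ := fun i =>
  extW k q y (i : ℕ) - (if (i : ℕ) = 0 then 0 else extW k q y ((i : ℕ) - 1))

/-- The map `ψ(x₁,…,x_k) = (x₁, x₁+x₂, …, x₁+⋯+x_{k-1})`. -/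
def psi (k : ℕ) (x : Fin k → ℤ) : Fin (k-1) → ℤ := fun j =>
  ∑ i ∈ Finset.univ.filter (fun i : Fin k => (i : ℕ) ≤ (j : ℕ)), x i

/-- Auxiliary extension of `y : Fin (k-1) → ℝ` to `ℕ`, taking value `q` beyond `k-2`. -/
def extWR (k q : ℕ) (y : Fin (k-1) → ℝ) : ℕ → ℝ := fun n =>
  if h : n < k - 1 then y ⟨n, h⟩ else (q : ℝ)

/-- The map `φ` extended to `ℝ^{k-1}` by the same formula. -/
def phiR (k q : ℕ) (y : Fin (k-1) → ℝ) : Fin k → ℝ := fun i =>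
  extWR k q y (i : ℕ) - (if (i : ℕ) = 0 then 0 else extWR k q y ((i : ℕ) - 1))


/-- Extension of a vector `d : Fin k → ℤ` to `ℕ` by zero. -/
def Dext (k : ℕ) (d : Fin k → ℤ) : ℕ → ℤ := fun n => if h : n < k then d ⟨n, h⟩ else 0

/-- Partial sums of the extension. -/
def Psum (k : ℕ) (d : Fin k → ℤ) : ℕ → ℤ := fun n => ∑ i ∈ Finset.range n, Dext k d i

lemma sign_lemma {k : ℕ} (d : Fin k → ℤ) (hr : ∀ i, d i = -1 ∨ d i = 0 ∨ d i = 1)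
    (ha : AltSign d) :
    (∀ j, Psum k d j = -1 ∨ Psum k d j = 0 ∨ Psum k d j = 1) ∧
    (∀ j1 j2, Psum k d j1 ≠ 0 → Psum k d j2 ≠ 0 → Psum k d j1 = Psum k d j2) := by
  set Q := Psum k d with hQdef
  set D := Dext k d with hDdef
  have hQsucc : ∀ n, Q (n + 1) = Q n + D n := fun n => Finset.sum_range_succ _ n
  have hQ0 : Q 0 = 0 := Finset.sum_range_zero _
  have hDr : ∀ n, D n = -1 ∨ D n = 0 ∨ D n = 1 := by
    intro n
    rw [hDdef]; unfold Dext
    split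
    · exact hr _
    · tauto
  have hDval : ∀ n (h : n < k), D n = d ⟨n, h⟩ := by
    intro n h; rw [hDdef]; unfold Dext; rw [dif_pos h]
  have Inv : ∀ n, (∀ j ≤ n, Q j = 0) ∨
      ∃ s m, (s = 1 ∨ s = -1) ∧ m < n ∧ D m ≠ 0 ∧
        (∀ l, m < l → l < n → D l = 0) ∧ (∀ j ≤ n, Q j = 0 ∨ Q j = s) := by
    intro n
    induction n with
    | zero =>
      left; intro j hj
      have : j = 0 := by omega
      subst this; exact hQ0
    | succ n ih =>
      by_cases hDn : D n = 0
      · rcases ih with h | ⟨s, m, hs, hm, hDm, hz, hQ⟩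
        · left; intro j hj
          rcases Nat.lt_or_ge j (n + 1) with hj' | hj'
          · exact h j (by omega)
          · have hje : j = n + 1 := by omega
            subst hje; rw [hQsucc, h n le_rfl, hDn]; ring
        · right
          refine ⟨s, m, hs, by omega, hDm, ?_, ?_⟩
          · intro l hl1 hl2
            rcases Nat.lt_or_ge l n with h' | h'
            · exact hz l hl1 h'
            · have : l = n := by omega
              subst this; exact hDn
          · intro j hj
            rcases Nat.lt_or_ge j (n + 1) with h' | h'
            · exact hQ j (by omega)
            · have hje : j = n + 1 := by omega
              subst hje
              have := hQ n le_rfl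
              rw [hQsucc, hDn]
              omega
      · have hnk : n < k := by
          by_contra h
          exact hDn (by rw [hDdef]; unfold Dext; rw [dif_neg h])
        rcases ih with h | ⟨s, m, hs, hm, hDm, hz, hQ⟩
        · right
          refine ⟨D n, n, ?_, Nat.lt_succ_self n, hDn, fun l h1 h2 => by omega, ?_⟩
          · have := hDr n; tauto
          · intro j hj
            rcases Nat.lt_or_ge j (n + 1) with h' | h'
            · left; exact h j (by omega)
            · have hje : j = n + 1 := by omega
              subst hje; right; rw [hQsucc, h n le_rfl]; ring
        · have hmk : m < k := by
            by_contra h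
            exact hDm (by rw [hDdef]; unfold Dext; rw [dif_neg h])
          have halt : d ⟨m, hmk⟩ = - d ⟨n, hnk⟩ := by
            refine ha ⟨m, hmk⟩ ⟨n, hnk⟩ (by simpa using hm) ?_ ?_ ?_
            · rw [← hDval m hmk]; exact hDm
            · rw [← hDval n hnk]; exact hDn
            · intro l hl1 hl2
              have hlk : (l : ℕ) < k := l.isLt
              have := hz (l : ℕ) (Fin.lt_def.mp hl1) (Fin.lt_def.mp hl2)
              rw [hDval (l : ℕ) hlk] at this
              simpa using this
          have hDmn : D m = - D n := by
            rw [hDval m hmk, hDval n hnk]; exact halt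
          -- telescoping: Q is constant on [m+1, n]
          have hconst : ∀ t, m + 1 ≤ t → t ≤ n → Q t = Q (m + 1) := by
            intro t ht1 ht2
            induction t with
            | zero => omega
            | succ t iht =>
              rcases Nat.lt_or_ge (m + 1) (t + 1) with h' | h'
              · rw [hQsucc, iht (by omega) (by omega), hz t (by omega) (by omega)]; ring
              · have : t + 1 = m + 1 := by omega
                rw [this]
          have hQn : Q n = Q m + D m := by
            rw [hconst n (by omega) le_rfl, hQsucc]
          right
          refine ⟨s, n, hs, Nat.lt_succ_self n, hDn, fun l h1 h2 => by omega, ?_⟩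
          intro j hj
          rcases Nat.lt_or_ge j (n + 1) with h' | h'
          · exact hQ j (by omega)
          · have hje : j = n + 1 := by omega
            subst hje
            have h1 := hQ m (by omega)
            have h2 := hQ n le_rfl
            have h3 := hQsucc n
            have h4 := hDr n
            omega
  constructor
  · intro j
    rcases Inv j with h | ⟨s, m, hs, _, _, _, hQ⟩
    · right; left; exact h j le_rfl
    · have := hQ j le_rfl; omega
  · intro j1 j2 h1 h2
    rcases Inv (max j1 j2) with h | ⟨s, m, hs, _, _, _, hQ⟩
    · exact absurd (h j1 (le_max_left _ _)) h1
    · have e1 := hQ j1 (le_max_left _ _)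
      have e2 := hQ j2 (le_max_right _ _)
      omega


lemma psum_sub {k : ℕ} (u w : Fin k → ℤ) (j : ℕ) :
    Psum k (fun i => u i - w i) j = Psum k u j - Psum k w j := by
  unfold Psum
  rw [← Finset.sum_sub_distrib]
  refine Finset.sum_congr rfl fun i _ => ?_
  unfold Dext
  split <;> simp

lemma psum_stable {k : ℕ} (d : Fin k → ℤ) (n : ℕ) (hn : k ≤ n) :
    Psum k d n = ∑ i, d i := by
  have hbase : Psum k d k = ∑ i, d i := by
    unfold Psum
    rw [← Fin.sum_univ_eq_sum_range (fun n => Dext k d n) k]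
    refine Finset.sum_congr rfl fun i _ => ?_
    unfold Dext
    rw [dif_pos i.isLt]
  induction n with
  | zero =>
    have hk0 : k = 0 := by omega
    subst hk0
    simp [Psum]
  | succ n ih =>
    rcases Nat.lt_or_ge n k with h' | h'
    · have : n + 1 = k := by omega
      rw [this, hbase]
    · have hs : Psum k d (n + 1) = Psum k d n + Dext k d n := Finset.sum_range_succ _ n
      rw [hs, ih h']
      unfold Dext
      rw [dif_neg (by omega)]
      ring

lemma no_zero_cell (k q : ℕ) (hk : 2 ≤ k) (S : Finset (Fin k → ℤ)) (hS : IsCell k q S)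
    (h0 : ∀ v ∈ S, v ⟨0, by omega⟩ = 0) : False := by
  obtain ⟨hcard, hin, hadj⟩ := hS
  set wt : (Fin k → ℤ) → ℤ := fun u => ∑ j ∈ Finset.Icc 2 (k - 1), Psum k u j with hwt
  have pair : ∀ u ∈ S, ∀ w ∈ S, u ≠ w → wt u ≠ wt w ∧ |wt u - wt w| ≤ (k : ℤ) - 2 := by
    intro u hu w hw hne
    obtain ⟨-, hsu, hsw, hr, -, ha⟩ := hadj u hu w hw hne
    set d : Fin k → ℤ := fun i => u i - w i with hd
    obtain ⟨htri, heqz⟩ := sign_lemma d hr ha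
    have hdsum : ∑ i, d i = 0 := by
      have : ∑ i, d i = (∑ i, u i) - ∑ i, w i := by
        rw [← Finset.sum_sub_distrib]
      rw [this, hsu.2, hsw.2]; ring
    have hPtail : ∀ n, k ≤ n → Psum k d n = 0 := fun n hn => by
      rw [psum_stable d n hn, hdsum]
    have hP0 : Psum k d 0 = 0 := Finset.sum_range_zero _
    have hP1 : Psum k d 1 = 0 := by
      unfold Psum
      rw [Finset.sum_range_one]
      unfold Dext
      rw [dif_pos (by omega : 0 < k)]
      show u ⟨0, by omega⟩ - w ⟨0, by omega⟩ = 0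
      rw [h0 u hu, h0 w hw]; ring
    have hnz : ∃ n, Psum k d n ≠ 0 := by
      by_contra h
      push_neg at h
      apply hne
      funext i
      have hstep : Psum k d ((i : ℕ) + 1) = Psum k d (i : ℕ) + Dext k d (i : ℕ) :=
        Finset.sum_range_succ _ _
      have hDi : Dext k d (i : ℕ) = d i := by
        unfold Dext
        rw [dif_pos i.isLt]
      rw [h, h, hDi] at hstep
      have : d i = 0 := by omega
      have : u i - w i = 0 := this
      omega
    obtain ⟨n, hn⟩ := hnz
    have hn2 : 2 ≤ n := by
      rcases Nat.lt_or_ge n 2 with h' | h'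
      · interval_cases n
        · exact absurd hP0 hn
        · exact absurd hP1 hn
      · exact h'
    have hnk : n ≤ k - 1 := by
      by_contra h'
      exact hn (hPtail n (by omega))
    have hmem : n ∈ Finset.Icc 2 (k - 1) := Finset.mem_Icc.mpr ⟨hn2, hnk⟩
    have hdiff : wt u - wt w = ∑ j ∈ Finset.Icc 2 (k - 1), Psum k d j := by
      rw [hwt]
      rw [← Finset.sum_sub_distrib]
      exact (Finset.sum_congr rfl fun j _ => (psum_sub u w j).symm)
    have hterm : ∀ j ∈ Finset.Icc 2 (k - 1), Psum k d j = 0 ∨ Psum k d j = Psum k d n := by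
      intro j _
      by_cases h' : Psum k d j = 0
      · left; exact h'
      · right; exact heqz j n h' hn
    have hsval := htri n
    constructor
    · intro heq
      have hzero : ∑ j ∈ Finset.Icc 2 (k - 1), Psum k d j = 0 := by
        rw [← hdiff]; omega
      rcases hsval with h' | h' | h'
      · -- all terms ≤ 0, term at n is -1 < 0
        have hpos : 0 < ∑ j ∈ Finset.Icc 2 (k - 1), (- Psum k d j) := by
          refine Finset.sum_pos' (fun j hj => ?_) ⟨n, hmem, by omega⟩
          rcases hterm j hj with h'' | h'' <;> omega
        rw [Finset.sum_neg_distrib] at hpos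
        omega
      · exact hn h'
      · have hpos : 0 < ∑ j ∈ Finset.Icc 2 (k - 1), Psum k d j := by
          refine Finset.sum_pos' (fun j hj => ?_) ⟨n, hmem, by omega⟩
          rcases hterm j hj with h'' | h'' <;> omega
        omega
    · rw [hdiff]
      calc |∑ j ∈ Finset.Icc 2 (k - 1), Psum k d j|
          ≤ ∑ j ∈ Finset.Icc 2 (k - 1), |Psum k d j| := Finset.abs_sum_le_sum_abs _ _
        _ ≤ ∑ _j ∈ Finset.Icc 2 (k - 1), (1 : ℤ) := by
            refine Finset.sum_le_sum fun j _ => ?_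
            have := htri j
            rcases this with h' | h' | h' <;> rw [h'] <;> simp
        _ = ((Finset.Icc 2 (k - 1)).card : ℤ) := by rw [Finset.sum_const]; simp
        _ ≤ (k : ℤ) - 2 := by
            rw [Nat.card_Icc]
            have : k - 1 + 1 - 2 = k - 2 := by omega
            rw [this]
            omega
  -- pigeonhole
  have hinj : Set.InjOn wt S := by
    intro u hu w hw h
    by_contra hne
    exact (pair u hu w hw hne).1 h
  set T := S.image wt with hT
  have hTcard : T.card = k := by
    rw [hT, Finset.card_image_of_injOn hinj, hcard]
  have hTne : T.Nonempty := Finset.card_pos.mp (by omega)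
  obtain ⟨u, hu, hum⟩ := Finset.mem_image.mp (T.min'_mem hTne)
  obtain ⟨v, hv, hvM⟩ := Finset.mem_image.mp (T.max'_mem hTne)
  have hmM : T.min' hTne ≤ T.max' hTne := T.min'_le _ (T.max'_mem hTne)
  have hMm : T.max' hTne - T.min' hTne ≤ (k : ℤ) - 2 := by
    by_cases huv : v = u
    · rw [← hum, ← hvM, huv]; omega
    · have habs := (pair v hv u hu huv).2
      rw [hum, hvM, abs_le] at habs
      omega
  have hsub : T ⊆ Finset.Icc (T.min' hTne) (T.max' hTne) := fun x hx =>
    Finset.mem_Icc.mpr ⟨T.min'_le x hx, T.le_max' x hx⟩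
  have hle := Finset.card_le_card hsub
  rw [hTcard, Int.card_Icc] at hle
  omega

/-- Under the first-choice labeling `c`, a cell `S` of the regular
triangulation of `Δ_{k,q}` is non-monochromatic iff it contains a vertex whose
first coordinate equals `0`. -/
theorem first_choice_nonmono_iff (k q : ℕ) (hk : 2 ≤ k) (hq : 1 ≤ q)
    (c : (Fin k → ℤ) → Fin k)
    (hc : ∀ v : Fin k → ℤ, inSimplex k q v → IsLeast {i : Fin k | 0 < v i} (c v))
    (S : Finset (Fin k → ℤ)) (hS : IsCell k q S) :
    NonMono c S ↔ ∃ v ∈ S, v ⟨0, by omega⟩ = 0 := by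
  have hzero_lab : ∀ x ∈ S, x ⟨0, by omega⟩ ≠ 0 → c x = ⟨0, by omega⟩ := by
    intro x hx hx0
    have hins := hS.2.1 x hx
    have hle := hc x hins
    have hpos : 0 < x ⟨0, by omega⟩ := lt_of_le_of_ne (hins.1 _) (Ne.symm hx0)
    have h1 : c x ≤ ⟨0, by omega⟩ := hle.2 hpos
    have h2 : (c x : ℕ) ≤ 0 := h1
    exact Fin.ext (show (c x : ℕ) = 0 by omega)
  have hlab_ne : ∀ x ∈ S, x ⟨0, by omega⟩ = 0 → c x ≠ ⟨0, by omega⟩ := by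
    intro x hx hx0 hcx
    have hins := hS.2.1 x hx
    have hle := hc x hins
    have : 0 < x (c x) := hle.1
    rw [hcx, hx0] at this
    exact lt_irrefl 0 this
  constructor
  · rintro ⟨u, hu, v, hv, huv⟩
    by_contra hno
    push_neg at hno
    exact huv ((hzero_lab u hu (hno u hu)).trans (hzero_lab v hv (hno v hv)).symm)
  · rintro ⟨v, hv, hv0⟩
    by_contra hmono
    unfold NonMono at hmono
    push_neg at hmono
    have hall0 : ∀ u ∈ S, u ⟨0, by omega⟩ = 0 := by
      intro u hu
      by_contra hu0
      have h1 : c u = ⟨0, by omega⟩ := hzero_lab u hu hu0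
      have h2 : c u = c v := hmono u hu v hv
      exact hlab_ne v hv hv0 (h2 ▸ h1)
    exact no_zero_cell k q hk S hS hall0
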